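/- arXiv:math/9204221 — 4 statements merged into one kernel-verified Lean document; each statement's English description precedes it below -/
import Mathlib

section
/- Let M be a smooth manifold, let c : ℝ → M be a smooth curve with c(0) = x, and let k ≥ 1. Assume that for every smooth function f : M → ℝ the j-th derivative of t ↦ f(c(t)) at t = 0 vanishes for all 1 ≤ j ≤ k−1. Then the map f ↦ (d^k/dt^k)|_{t=0} f(c(t)) satisfies the Leibniz rule at x: for all smooth f, g : M → ℝ, (d^k/dt^k)|_{t=0} (f·g)(c(t)) = ((d^k/dt^k)|_{t=0} f(c(t)))·g(x) + f(x)·((d^k/dt^k)|_{t=0} g(c(t))). -/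
open scoped Manifold
open Set Function

noncomputable section

variable {E : Type*} [NormedAddCommGroup E] [NormedSpace ℝ E]
  {H : Type*} [TopologicalSpace H]

instance {M : Type*} [TopologicalSpace M] [ChartedSpace H M] {I : ModelWithCorners ℝ E H}
    {x : M} : NormedAddCommGroup (TangentSpace I x) :=
  inferInstanceAs (NormedAddCommGroup E)

instance {M : Type*} [TopologicalSpace M] [ChartedSpace H M] {I : ModelWithCorners ℝ E H}
    {x : M} : NormedSpace ℝ (TangentSpace I x) :=
  inferInstanceAs (NormedSpace ℝ E)

/-- The differential `(df)_x(v)` of a real valued function `f` at `x`,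
applied to a tangent vector `v`, as a real number. -/
def dApply (I : ModelWithCorners ℝ E H) {M : Type*} [TopologicalSpace M] [ChartedSpace H M]
    (f : M → ℝ) (x : M) (v : TangentSpace I x) : ℝ :=
  mfderiv I 𝓘(ℝ, ℝ) f x v

/-- A vector field is smooth if it is a smooth section of the tangent bundle. -/
def IsSmoothVectorField (I : ModelWithCorners ℝ E H) {M : Type*} [TopologicalSpace M]
    [ChartedSpace H M] [IsManifold I (⊤ : ℕ∞) M] (X : ∀ x : M, TangentSpace I x) : Prop :=
  ContMDiff I I.tangent (⊤ : ℕ∞) (fun x => (⟨x, X x⟩ : TangentBundle I M))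

/-- The pullback of a vector field under a map between manifolds, within a set
(Mathlib's `mpullbackWithin`). -/
def mpullbackWithin (I : ModelWithCorners ℝ E H) {E' : Type*} [NormedAddCommGroup E']
    [NormedSpace ℝ E'] {H' : Type*} [TopologicalSpace H'] (I' : ModelWithCorners ℝ E' H')
    {M : Type*} [TopologicalSpace M] [ChartedSpace H M]
    {M' : Type*} [TopologicalSpace M'] [ChartedSpace H' M']
    (f : M → M') (V : ∀ x : M', TangentSpace I' x) (s : Set M) (x : M) :
    TangentSpace I x :=
  (mfderivWithin I I' f s x).inverse (V (f x))

/-- The pullback of a vector field under a map between manifolds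
(Mathlib's `mpullback`): `x ↦ (T_x f)⁻¹ (V (f x))`. -/
def mpullback (I : ModelWithCorners ℝ E H) {E' : Type*} [NormedAddCommGroup E']
    [NormedSpace ℝ E'] {H' : Type*} [TopologicalSpace H'] (I' : ModelWithCorners ℝ E' H')
    {M : Type*} [TopologicalSpace M] [ChartedSpace H M]
    {M' : Type*} [TopologicalSpace M'] [ChartedSpace H' M']
    (f : M → M') (V : ∀ x : M', TangentSpace I' x) (x : M) :
    TangentSpace I x :=
  (mfderiv I I' f x).inverse (V (f x))

/-- The Lie bracket of two vector fields on a manifold (Mathlib's `mlieBracket` convention: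
`[X,Y] = X(Y) - Y(X)`), defined by pulling the vector fields back to the model space via the
preferred chart and taking the Lie bracket of vector fields there. -/
def mlieBracket (I : ModelWithCorners ℝ E H) {M : Type*} [TopologicalSpace M] [ChartedSpace H M]
    (V W : ∀ x : M, TangentSpace I x) (x₀ : M) : TangentSpace I x₀ :=
  mpullback I 𝓘(ℝ, E) (extChartAt I x₀)
    (VectorField.lieBracketWithin ℝ
      (mpullbackWithin 𝓘(ℝ, E) I (extChartAt I x₀).symm V (Set.range I))
      (mpullbackWithin 𝓘(ℝ, E) I (extChartAt I x₀).symm W (Set.range I))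
      (Set.range I)) x₀

/-- A smooth curve of diffeomorphisms through the identity on `M`: a jointly smooth map
`φ : ℝ × M → M` with `φ 0 = id`, each `φ t` bijective, with jointly smooth inverse. -/
structure DiffeoCurve (I : ModelWithCorners ℝ E H) (M : Type*) [TopologicalSpace M]
    [ChartedSpace H M] [IsManifold I (⊤ : ℕ∞) M] where
  toFun : ℝ → M → M
  invFun : ℝ → M → M
  smooth_toFun : ContMDiff (𝓘(ℝ, ℝ).prod I) I (⊤ : ℕ∞) fun p : ℝ × M => toFun p.1 p.2
  smooth_invFun : ContMDiff (𝓘(ℝ, ℝ).prod I) I (⊤ : ℕ∞) fun p : ℝ × M => invFun p.1 p.2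
  toFun_zero : ∀ x, toFun 0 x = x
  left_inv : ∀ t x, invFun t (toFun t x) = x
  right_inv : ∀ t x, toFun t (invFun t x) = x

/-- `φ` has first non-vanishing derivative `k! • X` at `0`: for every point `x` and smooth
`f : M → ℝ`, the `j`-th derivative of `t ↦ f (φ_t x)` at `0` vanishes for `1 ≤ j ≤ k-1`, and the
`k`-th derivative equals `k! * (df)_x (X x)`. -/
def HasFirstNonvanishingDeriv {I : ModelWithCorners ℝ E H} {M : Type*} [TopologicalSpace M]
    [ChartedSpace H M] [IsManifold I (⊤ : ℕ∞) M] (φ : DiffeoCurve I M) (k : ℕ)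
    (X : ∀ x : M, TangentSpace I x) : Prop :=
  ∀ (x : M) (f : M → ℝ), ContMDiff I 𝓘(ℝ, ℝ) (⊤ : ℕ∞) f →
    (∀ j : ℕ, 1 ≤ j → j < k → iteratedDeriv j (fun t => f (φ.toFun t x)) 0 = 0) ∧
    iteratedDeriv k (fun t => f (φ.toFun t x)) 0 = (k.factorial : ℝ) * dApply I f x (X x)

/-- The commutator `(α, β) ↦ β⁻¹ ∘ α⁻¹ ∘ β ∘ α` on pairs (curve, inverse curve). -/
def commOp {M : Type*} (p q : (ℝ → M → M) × (ℝ → M → M)) : (ℝ → M → M) × (ℝ → M → M) :=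
  (fun t x => q.2 t (p.2 t (q.1 t (p.1 t x))),
   fun t x => p.2 t (q.2 t (p.1 t (q.1 t x))))

theorem pascal_sum (a b : ℕ → ℝ) (n : ℕ) :
    ∑ j ∈ Finset.range (n + 1), (n.choose j : ℝ) * a (j + 1) * b (n - j)
      + ∑ j ∈ Finset.range (n + 1), (n.choose j : ℝ) * a j * b (n - j + 1)
    = ∑ j ∈ Finset.range (n + 2), ((n + 1).choose j : ℝ) * a j * b (n + 1 - j) := by
  have h1 : ∑ j ∈ Finset.range (n + 1), (n.choose j : ℝ) * a j * b (n - j + 1)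
      = ∑ i ∈ Finset.range (n + 1), (n.choose (i + 1) : ℝ) * a (i + 1) * b (n - i)
        + a 0 * b (n + 1) := by
    rw [Finset.sum_range_succ (fun i => (n.choose (i + 1) : ℝ) * a (i + 1) * b (n - i)) n,
      Finset.sum_range_succ' (fun j => (n.choose j : ℝ) * a j * b (n - j + 1)) n]
    simp only [Nat.choose_succ_self, Nat.cast_zero, zero_mul, add_zero,
      Nat.choose_zero_right, Nat.cast_one, one_mul, Nat.sub_zero]
    congr 1
    apply Finset.sum_congr rfl
    intro i hi
    have h : n - (i + 1) + 1 = n - i := by have := Finset.mem_range.1 hi; omega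
    rw [h]
  rw [Finset.sum_range_succ' (fun j => ((n + 1).choose j : ℝ) * a j * b (n + 1 - j)) (n + 1)]
  simp only [Nat.choose_succ_succ, Nat.cast_add, add_mul, Nat.succ_sub_succ,
    Finset.sum_add_distrib, Nat.choose_zero_right, Nat.cast_one, one_mul, Nat.sub_zero]
  rw [h1]
  ring

theorem leibniz_iter (F G : ℝ → ℝ) (hF : ContDiff ℝ ((⊤:ℕ∞) : WithTop ℕ∞) F) (hG : ContDiff ℝ ((⊤:ℕ∞) : WithTop ℕ∞) G) (n : ℕ) :
    iteratedDeriv n (fun t => F t * G t) = fun t =>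
      ∑ j ∈ Finset.range (n + 1),
        (n.choose j : ℝ) * iteratedDeriv j F t * iteratedDeriv (n - j) G t := by
  induction n with
  | zero => funext t; simp
  | succ n ih =>
    have hdF : ∀ m : ℕ, Differentiable ℝ (iteratedDeriv m F) := fun m =>
      hF.differentiable_iteratedDeriv m (by exact_mod_cast ENat.coe_lt_top m)
    have hdG : ∀ m : ℕ, Differentiable ℝ (iteratedDeriv m G) := fun m =>
      hG.differentiable_iteratedDeriv m (by exact_mod_cast ENat.coe_lt_top m)
    rw [iteratedDeriv_succ, ih]
    funext t
    rw [deriv_fun_sum (fun j _ => by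
      exact (((hdF j).differentiableAt.const_mul _).mul (hdG _).differentiableAt))]
    have hterm : ∀ j, deriv (fun t => (n.choose j : ℝ) * iteratedDeriv j F t * iteratedDeriv (n - j) G t) t
        = (n.choose j : ℝ) * iteratedDeriv (j+1) F t * iteratedDeriv (n - j) G t
          + (n.choose j : ℝ) * iteratedDeriv j F t * iteratedDeriv (n - j + 1) G t := by
      intro j
      rw [deriv_fun_mul (((hdF j).differentiableAt).const_mul _) (hdG _).differentiableAt,
        deriv_const_mul _ (hdF j).differentiableAt, ← iteratedDeriv_succ, ← iteratedDeriv_succ]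
      try ring
    simp only [hterm]
    rw [Finset.sum_add_distrib]
    exact pascal_sum (fun j => iteratedDeriv j F t) (fun j => iteratedDeriv j G t) n

/-- If `c : ℝ → M` is a smooth curve with `c 0 = x` and, for every smooth
`f : M → ℝ`, the derivatives of `t ↦ f (c t)` at `0` of orders `1,…,k-1` vanish, then
`f ↦ (d^k/dt^k)|₀ f (c t)` satisfies the Leibniz rule at `x`. -/
theorem leibniz_rule_of_lower_derivs_vanish
    {E : Type*} [NormedAddCommGroup E] [NormedSpace ℝ E] [FiniteDimensional ℝ E]
    {H : Type*} [TopologicalSpace H] {I : ModelWithCorners ℝ E H} [I.Boundaryless]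
    {M : Type*} [TopologicalSpace M] [ChartedSpace H M] [IsManifold I (⊤ : ℕ∞) M]
    (c : ℝ → M) (hc : ContMDiff 𝓘(ℝ, ℝ) I (⊤ : ℕ∞) c) (x : M) (hcx : c 0 = x)
    (k : ℕ) (hk : 1 ≤ k)
    (hvanish : ∀ f : M → ℝ, ContMDiff I 𝓘(ℝ, ℝ) (⊤ : ℕ∞) f →
      ∀ j : ℕ, 1 ≤ j → j < k → iteratedDeriv j (fun t => f (c t)) 0 = 0) :
    ∀ f g : M → ℝ, ContMDiff I 𝓘(ℝ, ℝ) (⊤ : ℕ∞) f → ContMDiff I 𝓘(ℝ, ℝ) (⊤ : ℕ∞) g →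
      iteratedDeriv k (fun t => f (c t) * g (c t)) 0 =
        iteratedDeriv k (fun t => f (c t)) 0 * g x
          + f x * iteratedDeriv k (fun t => g (c t)) 0 := by

  intro f g hf hg
  have hF : ContDiff ℝ ((⊤:ℕ∞) : WithTop ℕ∞) (fun t => f (c t)) :=
    (hf.comp hc).contDiff
  have hG : ContDiff ℝ ((⊤:ℕ∞) : WithTop ℕ∞) (fun t => g (c t)) :=
    (hg.comp hc).contDiff
  obtain ⟨m, rfl⟩ : ∃ m, k = m + 1 := ⟨k - 1, by omega⟩
  have hL := congrFun (leibniz_iter _ _ hF hG (m + 1)) 0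
  rw [hL, Finset.sum_range_succ]
  have hmid : ∑ j ∈ Finset.range (m + 1),
      ((m + 1).choose j : ℝ) * iteratedDeriv j (fun t => f (c t)) 0
        * iteratedDeriv (m + 1 - j) (fun t => g (c t)) 0
      = f x * iteratedDeriv (m + 1) (fun t => g (c t)) 0 := by
    rw [Finset.sum_eq_single_of_mem 0 (Finset.mem_range.2 (by omega))]
    · simp [iteratedDeriv_zero, hcx]
    · intro j hj hj0
      have h1 : 1 ≤ j := by omega
      have h2 : j < m + 1 := Finset.mem_range.1 hj
      rw [hvanish f hf j h1 h2]
      ring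
  rw [hmid]
  simp [iteratedDeriv_zero, hcx]
  ring
end
end

section
/- Let M be a smooth manifold, let X and Y be smooth vector fields on M, and let φ, ψ : ℝ × M → M be smooth maps with φ_0 = id_M, ψ_0 = id_M, such that for all (t,x) the derivative of s ↦ φ_s(x) at s = t equals X(φ_t(x)) and the derivative of s ↦ ψ_s(x) at s = t equals Y(ψ_t(x)) (φ is a global flow of X and ψ a global flow of Y). Define α_t(x) = ψ_{−t}(φ_{−t}(ψ_t(φ_t(x)))). Then for every smooth function f : M → ℝ and every x ∈ M, the first derivative of t ↦ f(α_t(x)) at t = 0 is 0. -/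
open scoped Manifold
open Set Function

noncomputable section

variable {E : Type*} [NormedAddCommGroup E] [NormedSpace ℝ E]
  {H : Type*} [TopologicalSpace H]

/-- If `φ` and `ψ` are global flows of smooth vector fields `X` and `Y`
with `φ 0 = ψ 0 = id`, and `α_t = ψ_{-t} ∘ φ_{-t} ∘ ψ_t ∘ φ_t`, then for every smooth
`f : M → ℝ` and every `x`, the first derivative of `t ↦ f (α_t x)` at `0` vanishes. -/
theorem first_deriv_commutator_of_flows_eq_zero
    {E : Type*} [NormedAddCommGroup E] [NormedSpace ℝ E] [FiniteDimensional ℝ E]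
    {H : Type*} [TopologicalSpace H] {I : ModelWithCorners ℝ E H} [I.Boundaryless]
    {M : Type*} [TopologicalSpace M] [ChartedSpace H M] [IsManifold I (⊤ : ℕ∞) M]
    (X Y : ∀ x : M, TangentSpace I x)
    (hX : IsSmoothVectorField I X) (hY : IsSmoothVectorField I Y)
    (φ ψ : ℝ → M → M)
    (hφ : ContMDiff (𝓘(ℝ, ℝ).prod I) I (⊤ : ℕ∞) fun p : ℝ × M => φ p.1 p.2)
    (hψ : ContMDiff (𝓘(ℝ, ℝ).prod I) I (⊤ : ℕ∞) fun p : ℝ × M => ψ p.1 p.2)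
    (hφ0 : ∀ x : M, φ 0 x = x) (hψ0 : ∀ x : M, ψ 0 x = x)
    (hφflow : ∀ (t : ℝ) (x : M), mfderiv 𝓘(ℝ, ℝ) I (fun s => φ s x) t ((1 : ℝ)) = X (φ t x))
    (hψflow : ∀ (t : ℝ) (x : M), mfderiv 𝓘(ℝ, ℝ) I (fun s => ψ s x) t ((1 : ℝ)) = Y (ψ t x))
    (f : M → ℝ) (hf : ContMDiff I 𝓘(ℝ, ℝ) (⊤ : ℕ∞) f) (x : M) :
    deriv (fun t => f (ψ (-t) (φ (-t) (ψ t (φ t x))))) 0 = 0 := by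
  set F : ℝ × ℝ → ℝ := fun p => f (ψ (-p.1) (φ (-p.1) (ψ p.2 (φ p.2 x)))) with hFdef
  set G : ℝ → ℝ := fun t => f (ψ t (φ t x)) with hGdef
  -- smoothness of F
  have hF : ContMDiff ((𝓘(ℝ, ℝ)).prod 𝓘(ℝ, ℝ)) 𝓘(ℝ, ℝ) (⊤ : ℕ∞) F := by
    apply hf.comp
    exact hψ.comp ((contMDiff_fst.neg).prodMk
      (hφ.comp ((contMDiff_fst.neg).prodMk
        (hψ.comp (contMDiff_snd.prodMk
          (hφ.comp (contMDiff_snd.prodMk contMDiff_const)))))))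
  have hFc : ContDiff ℝ (⊤ : ℕ∞) F := by
    rw [← modelWithCornersSelf_prod, chartedSpaceSelf_prod] at hF
    exact contMDiff_iff_contDiff.mp hF
  -- smoothness of G
  have hG : ContMDiff 𝓘(ℝ, ℝ) 𝓘(ℝ, ℝ) (⊤ : ℕ∞) G :=
    hf.comp (hψ.comp (contMDiff_id.prodMk
      (hφ.comp (contMDiff_id.prodMk contMDiff_const))))
  have hGc : ContDiff ℝ (⊤ : ℕ∞) G := contMDiff_iff_contDiff.mp hG
  have hGd : HasDerivAt G (deriv G 0) 0 :=
    ((hGc.differentiable (by simp)) 0).hasDerivAt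
  have hFd := ((hFc.differentiable (by simp)) ((0 : ℝ), (0 : ℝ))).hasFDerivAt
  -- derivative along the diagonal
  have hdiagc : HasDerivAt (fun t : ℝ => ((t, t) : ℝ × ℝ)) (1, 1) 0 :=
    (hasDerivAt_id (0 : ℝ)).prodMk (hasDerivAt_id (0 : ℝ))
  have hdiag : HasDerivAt (fun t : ℝ => F (t, t)) (fderiv ℝ F (0, 0) (1, 1)) 0 :=
    HasFDerivAt.comp_hasDerivAt (f := fun t : ℝ => ((t, t) : ℝ × ℝ)) 0 hFd hdiagc
  -- partial derivatives
  have hc1 : HasDerivAt (fun s : ℝ => ((s, 0) : ℝ × ℝ)) (1, 0) 0 :=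
    (hasDerivAt_id (0 : ℝ)).prodMk (hasDerivAt_const (0 : ℝ) (0 : ℝ))
  have hc2 : HasDerivAt (fun t : ℝ => ((0, t) : ℝ × ℝ)) (0, 1) 0 :=
    (hasDerivAt_const (0 : ℝ) (0 : ℝ)).prodMk (hasDerivAt_id (0 : ℝ))
  have h1 : HasDerivAt (fun s : ℝ => F (s, 0)) (fderiv ℝ F (0, 0) (1, 0)) 0 :=
    HasFDerivAt.comp_hasDerivAt (f := fun s : ℝ => ((s, 0) : ℝ × ℝ)) 0 hFd hc1
  have h2 : HasDerivAt (fun t : ℝ => F (0, t)) (fderiv ℝ F (0, 0) (0, 1)) 0 :=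
    HasFDerivAt.comp_hasDerivAt (f := fun t : ℝ => ((0, t) : ℝ × ℝ)) 0 hFd hc2
  -- identify the partial maps with G
  have e1 : (fun s : ℝ => F (s, 0)) = fun s => G (-s) := by
    funext s; simp [hFdef, hGdef, hφ0, hψ0]
  have e2 : (fun t : ℝ => F (0, t)) = G := by
    funext t; simp [hFdef, hGdef, hφ0, hψ0]
  have hGd0 : HasDerivAt G (deriv G 0) (-(0 : ℝ)) := by simpa using hGd
  have hGneg : HasDerivAt (fun s : ℝ => G (-s)) (-(deriv G 0)) 0 := by
    have h := hGd0.comp (0 : ℝ) (hasDerivAt_neg (0 : ℝ)); simp only [mul_neg, mul_one] at h; exact h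
  rw [e1] at h1
  rw [e2] at h2
  have v1 : fderiv ℝ F (0, 0) (1, 0) = -(deriv G 0) := h1.unique hGneg
  have v2 : fderiv ℝ F (0, 0) (0, 1) = deriv G 0 := h2.unique hGd
  have : deriv (fun t : ℝ => F (t, t)) 0 = fderiv ℝ F (0, 0) (1, 1) := hdiag.deriv
  have hsum : ((1 : ℝ), (1 : ℝ)) = ((1 : ℝ), (0 : ℝ)) + ((0 : ℝ), (1 : ℝ)) := by simp
  calc deriv (fun t => f (ψ (-t) (φ (-t) (ψ t (φ t x))))) 0
      = deriv (fun t : ℝ => F (t, t)) 0 := rfl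
    _ = fderiv ℝ F (0, 0) (1, 1) := hdiag.deriv
    _ = fderiv ℝ F (0, 0) (1, 0) + fderiv ℝ F (0, 0) (0, 1) := by
        rw [hsum, map_add]
    _ = 0 := by rw [v1, v2]; ring
end
end

section
/- Let M be a smooth manifold, let φ be a smooth curve of diffeomorphisms through the identity on M, let k ≥ 1, and let X be a smooth vector field on M such that φ has first non-vanishing derivative k!·X at 0. For a smooth function f : M → ℝ and x ∈ M define g(t) = (d/ds)|_{s=t} f(φ_s(φ_t^{-1}(x))) (the action on f of the right logarithmic derivative (∂_tφ_t)∘φ_t^{-1} at x). Then the r-th derivative of g at t = 0 vanishes for all 0 ≤ r ≤ k−2, and the (k−1)-st derivative of g at t = 0 equals k!·(df)_x(X(x)). -/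
open scoped Manifold
open Set Function

noncomputable section

variable {E : Type*} [NormedAddCommGroup E] [NormedSpace ℝ E]
  {H : Type*} [TopologicalSpace H]

namespace RightLogAux

open scoped ContDiff

/-- Directional derivative operator on functions `ℝ × ℝ → ℝ`. -/
def DD (v : ℝ × ℝ) (F : ℝ × ℝ → ℝ) : ℝ × ℝ → ℝ := fun p => fderiv ℝ F p v

lemma DD_smooth {F : ℝ × ℝ → ℝ} (hF : ContDiff ℝ ∞ F) (v : ℝ × ℝ) :
    ContDiff ℝ ∞ (DD v F) :=
  (contDiff_infty_iff_fderiv.1 hF).2.clm_apply contDiff_const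

lemma DD_iter_smooth {F : ℝ × ℝ → ℝ} (hF : ContDiff ℝ ∞ F) (v : ℝ × ℝ) (a : ℕ) :
    ContDiff ℝ ∞ ((DD v)^[a] F) := by
  induction a generalizing F with
  | zero => exact hF
  | succ a ih =>
    rw [Function.iterate_succ_apply]
    exact ih (DD_smooth hF v)

lemma hasDerivAt_line {F : ℝ × ℝ → ℝ} (hF : ContDiff ℝ ∞ F) (p v : ℝ × ℝ) (τ : ℝ) :
    HasDerivAt (fun s : ℝ => F (p + s • v)) (DD v F (p + τ • v)) τ := by
  have h1 : HasDerivAt (fun s : ℝ => p + s • v) v τ := by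
    simpa using ((hasDerivAt_id τ).smul_const v).const_add p
  exact ((hF.differentiable (by decide) _).hasFDerivAt).comp_hasDerivAt τ h1

lemma deriv_line {F : ℝ × ℝ → ℝ} (hF : ContDiff ℝ ∞ F) (p v : ℝ × ℝ) (τ : ℝ) :
    deriv (fun s : ℝ => F (p + s • v)) τ = DD v F (p + τ • v) :=
  (hasDerivAt_line hF p v τ).deriv

/-- Iterated derivative along a line equals iterated directional derivative. -/
lemma iteratedDeriv_line {F : ℝ × ℝ → ℝ} (hF : ContDiff ℝ ∞ F) (p v : ℝ × ℝ) (r : ℕ) :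
    iteratedDeriv r (fun s : ℝ => F (p + s • v)) 0 = (DD v)^[r] F p := by
  induction r generalizing F with
  | zero => simp
  | succ r ih =>
    rw [iteratedDeriv_succ']
    have : (deriv fun s : ℝ => F (p + s • v)) = fun s : ℝ => (DD v F) (p + s • v) :=
      funext fun τ => deriv_line hF p v τ
    rw [this, ih (DD_smooth hF v), Function.iterate_succ_apply]

/-- Clairaut: directional derivatives commute for smooth functions. -/
lemma DD_comm {F : ℝ × ℝ → ℝ} (hF : ContDiff ℝ ∞ F) (v w : ℝ × ℝ) (p : ℝ × ℝ) :
    DD w (DD v F) p = DD v (DD w F) p := by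
  have hdF : Differentiable ℝ (fderiv ℝ F) :=
    (contDiff_infty_iff_fderiv.1 hF).2.differentiable (by decide)
  have h1 : ∀ u : ℝ × ℝ, fderiv ℝ (fun y => fderiv ℝ F y u) p =
      (fderiv ℝ (fderiv ℝ F) p).flip u := by
    intro u
    have := fderiv_clm_apply (hdF p) (differentiableAt_const u)
    simpa using this
  have hsymm : IsSymmSndFDerivAt ℝ F p :=
    hF.contDiffAt.isSymmSndFDerivAt (by rw [minSmoothness_of_isRCLikeNormedField]; exact ENat.LEInfty.out)
  show fderiv ℝ (fun y => fderiv ℝ F y v) p w = fderiv ℝ (fun y => fderiv ℝ F y w) p v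
  rw [h1 v, h1 w]
  exact hsymm w v

lemma DD_add_vec (F : ℝ × ℝ → ℝ) (v w p : ℝ × ℝ) :
    DD (v + w) F p = DD v F p + DD w F p := (fderiv ℝ F p).map_add v w

lemma DD_add_fun {F G : ℝ × ℝ → ℝ} (hF : ContDiff ℝ ∞ F) (hG : ContDiff ℝ ∞ G) (v : ℝ × ℝ) :
    DD v (fun p => F p + G p) = fun p => DD v F p + DD v G p := by
  funext p
  show fderiv ℝ (fun q => F q + G q) p v = _
  rw [fderiv_fun_add ((hF.differentiable (by decide)).differentiableAt)
    ((hG.differentiable (by decide)).differentiableAt)]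
  rfl

lemma DD_iter_add {F G : ℝ × ℝ → ℝ} (hF : ContDiff ℝ ∞ F) (hG : ContDiff ℝ ∞ G)
    (v : ℝ × ℝ) (a : ℕ) :
    (DD v)^[a] (fun p => F p + G p) = fun p => (DD v)^[a] F p + (DD v)^[a] G p := by
  induction a generalizing F G with
  | zero => simp
  | succ a ih =>
    rw [Function.iterate_succ_apply, DD_add_fun hF hG,
      ih (DD_smooth hF v) (DD_smooth hG v), Function.iterate_succ_apply,
      Function.iterate_succ_apply]

lemma DD_iter_comm {v w : ℝ × ℝ} (a : ℕ) :
    ∀ F : ℝ × ℝ → ℝ, ContDiff ℝ ∞ F → (DD v)^[a] (DD w F) = DD w ((DD v)^[a] F) := by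
  induction a with
  | zero => intro F _; rfl
  | succ a ih =>
    intro F hF
    rw [Function.iterate_succ_apply]
    have h1 : DD v (DD w F) = DD w (DD v F) := funext fun p => DD_comm hF w v p
    rw [h1, ih (DD v F) (DD_smooth hF v), Function.iterate_succ_apply]

/-- Vanishing of vertical directional derivative on the vertical line. -/
lemma DD_vert_zero {F : ℝ × ℝ → ℝ} (hF : ContDiff ℝ ∞ F)
    (h : ∀ t : ℝ, F (0, t) = 0) (t : ℝ) : DD ((0 : ℝ), (1 : ℝ)) F (0, t) = 0 := by
  have h1 := hasDerivAt_line hF ((0 : ℝ), t) ((0 : ℝ), (1 : ℝ)) 0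
  have h2 : (fun s : ℝ => F (((0 : ℝ), t) + s • ((0 : ℝ), (1 : ℝ)))) = fun _ : ℝ => (0 : ℝ) := by
    funext s
    have : (((0 : ℝ), t) + s • ((0 : ℝ), (1 : ℝ))) = ((0 : ℝ), t + s) := by
      simp [Prod.ext_iff]
    rw [this, h]
  rw [h2] at h1
  have h3 := h1.unique (hasDerivAt_const 0 0)
  simpa using h3



/-- Decomposition of iterated horizontal derivatives of `DD (1,1) F` on the vertical line. -/
lemma iter_e1_Dw {F : ℝ × ℝ → ℝ} (hF : ContDiff ℝ ∞ F) (a : ℕ)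
    (hvan : ∀ t : ℝ, (DD ((1:ℝ),(0:ℝ)))^[a] F (0, t) = 0) (t : ℝ) :
    (DD ((1:ℝ),(0:ℝ)))^[a] (DD ((1:ℝ),(1:ℝ)) F) (0, t)
      = (DD ((1:ℝ),(0:ℝ)))^[a+1] F (0, t) := by
  have hsum : DD ((1:ℝ),(1:ℝ)) F
      = fun q => DD ((1:ℝ),(0:ℝ)) F q + DD ((0:ℝ),(1:ℝ)) F q := by
    funext q
    have : ((1:ℝ),(1:ℝ)) = ((1:ℝ),(0:ℝ)) + ((0:ℝ),(1:ℝ)) := by simp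
    rw [this, DD_add_vec]
  rw [hsum, DD_iter_add (DD_smooth hF _) (DD_smooth hF _)]
  have h2 : (DD ((1:ℝ),(0:ℝ)))^[a] (DD ((0:ℝ),(1:ℝ)) F) (0, t) = 0 := by
    rw [DD_iter_comm a F hF]
    exact DD_vert_zero (DD_iter_smooth hF _ a) hvan t
  show (DD ((1:ℝ),(0:ℝ)))^[a] (DD ((1:ℝ),(0:ℝ)) F) (0, t)
      + (DD ((1:ℝ),(0:ℝ)))^[a] (DD ((0:ℝ),(1:ℝ)) F) (0, t) = _
  rw [h2, ← Function.iterate_succ_apply, add_zero]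

lemma key : ∀ (r : ℕ) (F : ℝ × ℝ → ℝ), ContDiff ℝ ∞ F →
    (∀ a : ℕ, 1 ≤ a → a ≤ r → ∀ t : ℝ, (DD ((1:ℝ),(0:ℝ)))^[a] F (0, t) = 0) →
    (DD ((1:ℝ),(1:ℝ)))^[r] (DD ((1:ℝ),(0:ℝ)) F) (0, 0)
      = (DD ((1:ℝ),(0:ℝ)))^[r+1] F (0, 0) := by
  intro r
  induction r with
  | zero => intro F hF _; rfl
  | succ r ih =>
    intro F hF hvan
    have hw : ContDiff ℝ ∞ (DD ((1:ℝ),(1:ℝ)) F) := DD_smooth hF _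
    -- commute the outermost Dw inside
    have h1 : DD ((1:ℝ),(1:ℝ)) (DD ((1:ℝ),(0:ℝ)) F)
        = DD ((1:ℝ),(0:ℝ)) (DD ((1:ℝ),(1:ℝ)) F) :=
      funext fun p => DD_comm hF ((1:ℝ),(0:ℝ)) ((1:ℝ),(1:ℝ)) p
    rw [Function.iterate_succ_apply, h1]
    have hvan' : ∀ a : ℕ, 1 ≤ a → a ≤ r → ∀ t : ℝ,
        (DD ((1:ℝ),(0:ℝ)))^[a] (DD ((1:ℝ),(1:ℝ)) F) (0, t) = 0 := by
      intro a ha har t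
      rw [iter_e1_Dw hF a (fun t' => hvan a ha (by omega) t') t]
      exact hvan (a+1) (by omega) (by omega) t
    rw [ih (DD ((1:ℝ),(1:ℝ)) F) hw hvan']
    rw [iter_e1_Dw hF (r+1) (fun t' => hvan (r+1) (by omega) (by omega) t') 0]

/-- Main analytic lemma, in terms of `iteratedDeriv`. -/
lemma main_aux {F : ℝ × ℝ → ℝ} (hF : ContDiff ℝ ∞ F) (r : ℕ)
    (hvan : ∀ a : ℕ, 1 ≤ a → a ≤ r → ∀ t : ℝ,
      iteratedDeriv a (fun s : ℝ => F (s, t)) 0 = 0) :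
    iteratedDeriv r (fun t : ℝ => deriv (fun s : ℝ => F (s, t)) t) 0
      = iteratedDeriv (r+1) (fun s : ℝ => F (s, 0)) 0 := by
  have hline : ∀ t : ℝ, (fun s : ℝ => F (s, t))
      = fun s : ℝ => F (((0:ℝ), t) + s • ((1:ℝ),(0:ℝ))) := by
    intro t; funext s; simp
  have hvanD : ∀ a : ℕ, 1 ≤ a → a ≤ r → ∀ t : ℝ,
      (DD ((1:ℝ),(0:ℝ)))^[a] F (0, t) = 0 := by
    intro a h1 h2 t
    rw [← iteratedDeriv_line hF ((0:ℝ), t) ((1:ℝ),(0:ℝ)) a, ← hline t]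
    exact hvan a h1 h2 t
  have hL : (fun t : ℝ => deriv (fun s : ℝ => F (s, t)) t)
      = fun t : ℝ => (DD ((1:ℝ),(0:ℝ)) F) (((0:ℝ),(0:ℝ)) + t • ((1:ℝ),(1:ℝ))) := by
    funext t
    rw [hline t, deriv_line hF]
    have hpt : (((0:ℝ), t) + t • ((1:ℝ),(0:ℝ))) = (((0:ℝ),(0:ℝ)) + t • ((1:ℝ),(1:ℝ))) := by
      simp [Prod.ext_iff]
    rw [hpt]
  rw [hL, iteratedDeriv_line (DD_smooth hF _) ((0:ℝ),(0:ℝ)) ((1:ℝ),(1:ℝ)) r,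
    key r F hF hvanD, ← iteratedDeriv_line hF ((0:ℝ),(0:ℝ)) ((1:ℝ),(0:ℝ)) (r+1)]
  congr 1
  funext s
  simp

end RightLogAux

open scoped ContDiff

/-- If `φ` has first non-vanishing derivative `k! • X` at `0` and
`g t = (d/ds)|_{s=t} f (φ_s (φ_t⁻¹ x))` is the action of the right logarithmic derivative
`(∂_t φ_t) ∘ φ_t⁻¹` on a smooth `f` at `x`, then the derivatives of `g` at `0` of orders
`0,…,k-2` vanish and the `(k-1)`-st derivative equals `k! * (df)_x (X x)`. -/
theorem right_logarithmic_derivative_first_nonvanishing_deriv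
    {E : Type*} [NormedAddCommGroup E] [NormedSpace ℝ E] [FiniteDimensional ℝ E]
    {H : Type*} [TopologicalSpace H] {I : ModelWithCorners ℝ E H} [I.Boundaryless]
    {M : Type*} [TopologicalSpace M] [ChartedSpace H M] [IsManifold I (⊤ : ℕ∞) M]
    (φ : DiffeoCurve I M) (k : ℕ) (hk : 1 ≤ k)
    (X : ∀ x : M, TangentSpace I x) (hX : IsSmoothVectorField I X)
    (hφX : HasFirstNonvanishingDeriv φ k X)
    (f : M → ℝ) (hf : ContMDiff I 𝓘(ℝ, ℝ) (⊤ : ℕ∞) f) (x : M) :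
    (∀ r : ℕ, r + 2 ≤ k →
      iteratedDeriv r (fun t => deriv (fun s => f (φ.toFun s (φ.invFun t x))) t) 0 = 0) ∧
    iteratedDeriv (k - 1) (fun t => deriv (fun s => f (φ.toFun s (φ.invFun t x))) t) 0 =
      (k.factorial : ℝ) * dApply I f x (X x) := by
  have hx0 : φ.invFun 0 x = x := by
    have h := φ.left_inv 0 x
    rwa [φ.toFun_zero] at h
  have hBm : ContMDiff ((𝓘(ℝ, ℝ)).prod 𝓘(ℝ, ℝ)) 𝓘(ℝ, ℝ) (⊤ : ℕ∞)
      (fun p : ℝ × ℝ => f (φ.toFun p.1 (φ.invFun p.2 x))) := by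
    exact hf.comp (φ.smooth_toFun.comp (contMDiff_fst.prodMk
      (φ.smooth_invFun.comp (contMDiff_snd.prodMk contMDiff_const))))
  have hB : ContDiff ℝ ∞ (fun p : ℝ × ℝ => f (φ.toFun p.1 (φ.invFun p.2 x))) := by
    have h : ContMDiff 𝓘(ℝ, ℝ × ℝ) 𝓘(ℝ, ℝ) (⊤ : ℕ∞)
        (fun p : ℝ × ℝ => f (φ.toFun p.1 (φ.invFun p.2 x))) := by
      rw [modelWithCornersSelf_prod, ← chartedSpaceSelf_prod]
      exact hBm
    exact h.contDiff
  have hvan : ∀ a : ℕ, 1 ≤ a → a < k → ∀ t : ℝ,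
      iteratedDeriv a
        (fun s : ℝ => (fun p : ℝ × ℝ => f (φ.toFun p.1 (φ.invFun p.2 x))) (s, t)) 0 = 0 := by
    intro a h1 h2 t
    exact (hφX (φ.invFun t x) f hf).1 a h1 h2
  constructor
  · intro r hr
    have h := RightLogAux.main_aux hB r (fun a h1 h2 t => hvan a h1 (by omega) t)
    refine h.trans ?_
    show iteratedDeriv (r + 1) (fun s : ℝ => f (φ.toFun s (φ.invFun 0 x))) 0 = 0
    rw [hx0]
    exact (hφX x f hf).1 (r + 1) (by omega) (by omega)
  · have h := RightLogAux.main_aux hB (k - 1) (fun a h1 h2 t => hvan a h1 (by omega) t)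
    rw [Nat.sub_add_cancel hk] at h
    refine h.trans ?_
    show iteratedDeriv k (fun s : ℝ => f (φ.toFun s (φ.invFun 0 x))) 0 = _
    rw [hx0]
    exact (hφX x f hf).2
end
end

section
/- Let A be a complete normed (Banach) algebra over ℝ with unit, let X, Y, Z ∈ A, and let [g,h] = g·h·g^{-1}·h^{-1} denote the group commutator of invertible elements. Define c : ℝ → A by c(t) = [[exp(tX), exp(tY)], exp(tZ)]. Then c(0) = 1, the first and second derivatives of c at t = 0 vanish, and the third derivative of c at t = 0 equals 3!·⁅⁅X, Y⁆, Z⁆, where ⁅X,Y⁆ = X·Y − Y·X is the ring commutator. -/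
open scoped Topology

noncomputable section

/-- The group commutator `[g, h] = g * h * g⁻¹ * h⁻¹` of (invertible) elements of an algebra,
inverses being taken by `Ring.inverse`. -/
def groupCommutator {A : Type*} [NormedRing A] (g h : A) : A :=
  g * h * Ring.inverse g * Ring.inverse h

namespace ThirdDerivAux

open NormedSpace

variable {A : Type*} [NormedRing A] [NormedAlgebra ℝ A] [CompleteSpace A]

/-- `exp x` as a unit. -/
def expUnit (x : A) : Aˣ := ⟨exp x, exp (-x),
  by letI : NormedAlgebra ℚ A := NormedAlgebra.restrictScalars ℚ ℝ A
     rw [← exp_add_of_commute (Commute.neg_right (Commute.refl x)), add_neg_cancel, exp_zero],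
  by letI : NormedAlgebra ℚ A := NormedAlgebra.restrictScalars ℚ ℝ A
     rw [← exp_add_of_commute (Commute.neg_left (Commute.refl x)), neg_add_cancel, exp_zero]⟩

@[simp] lemma expUnit_val (x : A) : (expUnit x : A) = exp x := rfl
@[simp] lemma expUnit_inv_val (x : A) : ((expUnit x)⁻¹ : Aˣ) = (exp (-x) : A) := rfl

omit [NormedAlgebra ℝ A] [CompleteSpace A] in
lemma groupCommutator_units (u v : Aˣ) :
    groupCommutator (u : A) (v : A) = ((u * v * u⁻¹ * v⁻¹ : Aˣ) : A) := by
  simp [groupCommutator, Ring.inverse_unit, mul_assoc]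

/-- Noncommutative product over `Fin n`. -/
def finProd {n : ℕ} (f : Fin n → A) : A := (List.ofFn f).prod

omit [NormedAlgebra ℝ A] [CompleteSpace A] in
lemma finProd_succ {n : ℕ} (f : Fin (n + 1) → A) :
    finProd f = f 0 * finProd (fun i => f i.succ) := by
  simp [finProd, List.ofFn_succ]

omit [NormedAlgebra ℝ A] [CompleteSpace A] in
lemma finProd_zero (f : Fin 0 → A) : finProd f = 1 := by simp [finProd]

omit [CompleteSpace A] in
lemma hasDerivAt_finProd {n : ℕ} (f : Fin n → ℝ → A) (f' : Fin n → A) (t : ℝ)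
    (h : ∀ i, HasDerivAt (f i) (f' i) t) :
    HasDerivAt (fun s => finProd (fun i => f i s))
      (∑ i, finProd (fun j => if j = i then f' j else f j t)) t := by
  induction n with
  | zero => simpa [finProd_zero] using hasDerivAt_const t (1 : A)
  | succ n ih =>
    have h0 := ih (fun i => f i.succ) (fun i => f' i.succ) (fun i => h i.succ)
    have h1 : HasDerivAt (fun s => f 0 s * finProd (fun i : Fin n => f i.succ s)) _ t := (h 0).mul h0
    have e1 : (fun s => f 0 s * finProd (fun i : Fin n => f i.succ s)) =
        (fun s => finProd (fun i => f i s)) := by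
      funext s; rw [finProd_succ]
    rw [e1] at h1
    convert h1 using 1
    rw [Fin.sum_univ_succ, Finset.mul_sum]
    congr 1
    · rw [finProd_succ]
      simp [Fin.succ_ne_zero]
    · refine Finset.sum_congr rfl fun i _ => ?_
      rw [finProd_succ]
      simp [Fin.succ_inj, (Fin.succ_ne_zero i).symm]

variable {n : ℕ} (W : Fin n → A)

/-- The basic family of curves: products of `Wᵢ^{kᵢ} · exp(t Wᵢ)`. -/
def gg (k : Fin n → ℕ) (t : ℝ) : A := finProd (fun i => W i ^ k i * exp (t • W i))

lemma gg_at_zero (k : Fin n → ℕ) : gg W k 0 = finProd (fun i => W i ^ k i) := by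
  simp [gg, finProd]

lemma hasDerivAt_gg (k : Fin n → ℕ) (t : ℝ) :
    HasDerivAt (gg W k) (∑ i, gg W (k + Pi.single i 1) t) t := by
  have h := hasDerivAt_finProd (fun i s => W i ^ k i * exp (s • W i))
      (fun i => W i ^ k i * (exp (t • W i) * W i)) t
      (fun i => (hasDerivAt_exp_smul_const (W i) t).const_mul _)
  convert h using 1
  · rfl
  refine Finset.sum_congr rfl fun i _ => ?_
  unfold gg
  congr 1
  funext j
  by_cases hj : j = i
  · subst hj
    simp only [if_pos rfl, Pi.add_apply, Pi.single_eq_same]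
    rw [pow_succ, mul_assoc]
    congr 1
    exact (((Commute.refl (W j)).smul_left t).exp_left).eq.symm
  · simp [if_neg hj, Pi.single_eq_of_ne hj]

end ThirdDerivAux

set_option maxHeartbeats 4000000 in
open ThirdDerivAux NormedSpace in
/-- In a Banach algebra `A` over `ℝ` with unit, for `X Y Z : A` the curve
`c t = [[exp(tX), exp(tY)], exp(tZ)]` (iterated group commutator) satisfies `c 0 = 1`,
`c' 0 = 0`, `c'' 0 = 0`, and `c''' 0 = 3! • ⁅⁅X, Y⁆, Z⁆`, where `⁅X, Y⁆ = X*Y - Y*X` is the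
ring commutator. -/
theorem third_deriv_exp_group_commutator
    {A : Type*} [NormedRing A] [NormedAlgebra ℝ A] [CompleteSpace A]
    (X Y Z : A) (c : ℝ → A)
    (hc : ∀ t : ℝ, c t =
      groupCommutator (groupCommutator (NormedSpace.exp (t • X)) (NormedSpace.exp (t • Y)))
        (NormedSpace.exp (t • Z))) :
    c 0 = 1 ∧ deriv c 0 = 0 ∧ iteratedDeriv 2 c 0 = 0 ∧
      iteratedDeriv 3 c 0 =
        Nat.factorial 3 • ((X * Y - Y * X) * Z - Z * (X * Y - Y * X)) := by
  classical
  set W : Fin 10 → A := ![X, Y, -X, -Y, Z, Y, X, -Y, -X, -Z] with hW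
  -- Step A : c = gg W 0
  have hcg : c = gg W 0 := by
    funext t
    rw [hc t]
    have e1 : ∀ x : A, NormedSpace.exp (t • x) = ((expUnit (t • x) : Aˣ) : A) := fun x => rfl
    rw [e1 X, e1 Y, e1 Z, groupCommutator_units, groupCommutator_units]
    rw [gg, hW]
    simp only [Fin.isValue, Pi.zero_apply, pow_zero, one_mul]
    simp only [finProd_succ, finProd_zero, Matrix.cons_val_zero, Matrix.cons_val_succ,
      Fin.succ_zero_eq_one, Matrix.cons_val_one, Matrix.head_cons]
    simp only [mul_inv_rev, Units.val_mul, expUnit_val, expUnit_inv_val, smul_neg]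
    simp [mul_assoc]
  -- Step B : the derivatives
  have h1 : deriv c = fun t => ∑ i : Fin 10, gg W (Pi.single i 1) t := by
    funext t
    rw [hcg]
    have := (hasDerivAt_gg W 0 t).deriv
    simpa using this
  have h2 : deriv (deriv c) = fun t => ∑ i : Fin 10, ∑ j : Fin 10,
      gg W (Pi.single i 1 + Pi.single j 1) t := by
    funext t
    rw [h1]
    exact (HasDerivAt.fun_sum (fun i _ => hasDerivAt_gg W _ t)).deriv
  have h3 : deriv (deriv (deriv c)) 0 = ∑ i : Fin 10, ∑ j : Fin 10, ∑ l : Fin 10,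
      gg W (Pi.single i 1 + Pi.single j 1 + Pi.single l 1) 0 := by
    rw [h2]
    exact (HasDerivAt.fun_sum (fun i _ => HasDerivAt.fun_sum (fun j _ => hasDerivAt_gg W _ 0))).deriv
  refine ⟨?_, ?_, ?_, ?_⟩
  · rw [hcg, gg_at_zero, hW]
    simp [finProd_succ, finProd_zero]
  · rw [h1]
    simp only [gg_at_zero, hW]
    simp only [Fin.sum_univ_succ, Fin.sum_univ_zero, finProd_succ, finProd_zero, Pi.single_apply]
    norm_num [Fin.ext_iff, Matrix.cons_val_two, Matrix.tail_cons, Matrix.head_cons]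
    abel
  · rw [iteratedDeriv_succ, iteratedDeriv_one, h2]
    simp only [gg_at_zero, hW]
    simp only [Fin.sum_univ_succ, Fin.sum_univ_zero, finProd_succ, finProd_zero, Pi.add_apply,
      Pi.single_apply]
    norm_num [Fin.ext_iff, Matrix.cons_val_two, Matrix.tail_cons, Matrix.head_cons]
    noncomm_ring
  · rw [show (3 : ℕ) = 2 + 1 from rfl, iteratedDeriv_succ, iteratedDeriv_succ,
      iteratedDeriv_one, h3]
    simp only [gg_at_zero, hW]
    simp (config := { maxSteps := 10000000 }) only [Fin.sum_univ_succ, Fin.sum_univ_zero,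
      finProd_succ, finProd_zero, Pi.add_apply, Pi.single_apply]
    norm_num [Fin.ext_iff, Nat.factorial, Matrix.cons_val_two, Matrix.tail_cons, Matrix.head_cons]
    noncomm_ring
end
end
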